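/- Let π: ℝⁿ → ℝ² (n > 2) be the projection onto the first two coordinates, and let φ̂: X̂ → ℝⁿ be an L-Lipschitz quotient mapping from a metric space X̂ onto ℝⁿ. If π ∘ φ̂ is injective on some ball B(x̂, t) with t > 0, then φ̂(B(x̂, t)) contains no open ball of ℝⁿ, contradicting the Lipschitz quotient property; hence π ∘ φ̂ cannot be injective on any ball if φ̂ is a Lipschitz quotient mapping onto ℝⁿ with n > 2. -/

import Mathlib

/-- `F : X → Y` is an `L`-Lipschitz quotient mapping. -/
def IsLQ {X Y : Type*} [MetricSpace X] [MetricSpace Y] (L : ℝ) (F : X → Y) : Prop :=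
  ∀ (x : X) (r : ℝ), 0 < r →
    Metric.ball (F x) (r / L) ⊆ F '' Metric.ball x r ∧
    F '' Metric.ball x r ⊆ Metric.ball (F x) (L * r)

/-- If `φ : X → ℝⁿ` with `n > 2` is a Lipschitz quotient mapping and `π : ℝⁿ → ℝ²` is the
projection onto the first two coordinates, then `π ∘ φ` is not injective on any ball. -/
theorem stmt4 {X : Type*} [MetricSpace X] (n : ℕ) (hn : 2 < n)
    (L : ℝ) (hL : 1 ≤ L)
    (φ : X → EuclideanSpace ℝ (Fin n)) (hφ : IsLQ L φ)
    (π : EuclideanSpace ℝ (Fin n) → EuclideanSpace ℝ (Fin 2))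
    (hπ : ∀ (v : EuclideanSpace ℝ (Fin n)) (i : Fin 2), π v i = v (Fin.castLE hn.le i)) :
    ¬ ∃ (x : X) (t : ℝ), 0 < t ∧ Set.InjOn (π ∘ φ) (Metric.ball x t) := by
  rintro ⟨x, t, ht, hinj⟩
  have hL0 : (0 : ℝ) < L := lt_of_lt_of_le one_pos hL
  set j : Fin n := ⟨2, hn⟩ with hj
  set ε : ℝ := t / (2 * L) with hεdef
  have hε : 0 < ε := by positivity
  set y' : EuclideanSpace ℝ (Fin n) := φ x + EuclideanSpace.single j ε with hy'
  have hdist : dist y' (φ x) = ε := by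
    rw [dist_eq_norm]
    simp [hy', abs_of_pos hε]
  have hmem : y' ∈ Metric.ball (φ x) (t / L) := by
    rw [Metric.mem_ball, hdist, hεdef]
    exact div_lt_div_of_pos_left ht hL0 (by linarith)
  obtain ⟨b, hb, hφb⟩ := (hφ x t ht).1 hmem
  have hπeq : (π ∘ φ) b = (π ∘ φ) x := by
    ext i
    simp only [Function.comp_apply, hπ, hφb, hy']
    have hne : (Fin.castLE hn.le i : Fin n) ≠ j := by
      intro h
      have : (i : ℕ) = 2 := by
        simpa using congrArg Fin.val h
      omega
    simp [EuclideanSpace.single_apply, hne]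
  have hbx : b = x := hinj hb (Metric.mem_ball_self ht) hπeq
  have : y' j = φ x j := by rw [← hφb, hbx]
  simp [hy', EuclideanSpace.single_apply] at this
  exact absurd this (ne_of_gt hε)
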